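/- Let Q ∈ ℝ^{n×n}, with a_{i,j} := Q_{i,j} + Q_{j,i} for i ≠ j, a_{i,i} := Q_{i,i}, and S_{i,j} := Σ_{k ≠ i,j} max{0, a_{j,k} − a_{i,k}} + a_{j,j} − a_{i,i}. Define the edge set E := { (i, j) : i ≠ j, S_{i,j} ≤ 0, and (S_{j,i} ≤ 0 implies i < j) } and let G = (V, E) with V = {1,…,n}. Then min { x^⊤ Q x : x ∈ {0,1}^n } = min { x^⊤ Q x : x ∈ B_n^G }, i.e., G is valid with respect to minimization of φ(x) = x^⊤ Q x. -/

import Mathlib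

open Finset

/-- The set of binary vectors `{0,1}^n`, as real vectors. -/
def Bset (n : ℕ) : Set (Fin n → ℝ) := {x | ∀ i, x i = 0 ∨ x i = 1}

/-- The subset of `{0,1}^n` ordered by an edge set `E`. -/
def BsetG (n : ℕ) (E : Finset (Fin n × Fin n)) : Set (Fin n → ℝ) :=
  {x | x ∈ Bset n ∧ ∀ e ∈ E, x e.1 = 1 → x e.2 = 1}

/-- Quadratic form `x ⊤ Q x = ∑ i ∑ j Q i j * x i * x j`. -/
def quadForm (n : ℕ) (Q : Matrix (Fin n) (Fin n) ℝ) (x : Fin n → ℝ) : ℝ :=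
  ∑ i, ∑ j, Q i j * x i * x j

/-- Coefficient `a_{i,j}` of `x_i x_j` (or of `x_i` if `i = j`) in `x ⊤ Q x`. -/
def aCoef (n : ℕ) (Q : Matrix (Fin n) (Fin n) ℝ) (i j : Fin n) : ℝ :=
  if i = j then Q i i else Q i j + Q j i

/-- `S_{i,j} = ∑_{k ≠ i,j} max {0, a_{j,k} − a_{i,k}} + a_{j,j} − a_{i,i}`. -/
noncomputable def Sval (n : ℕ) (Q : Matrix (Fin n) (Fin n) ℝ) (i j : Fin n) : ℝ :=
  (∑ k ∈ univ.filter (fun k => k ≠ i ∧ k ≠ j), max 0 (aCoef n Q j k - aCoef n Q i k))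
    + aCoef n Q j j - aCoef n Q i i

/-- The edge set extracted from `Q`:
`E = {(i,j) : i ≠ j, S_{i,j} ≤ 0, and (S_{j,i} ≤ 0 → i < j)}`. -/
noncomputable def ordE (n : ℕ) (Q : Matrix (Fin n) (Fin n) ℝ) :
    Finset (Fin n × Fin n) :=
  univ.filter (fun p : Fin n × Fin n =>
    p.1 ≠ p.2 ∧ Sval n Q p.1 p.2 ≤ 0 ∧ (Sval n Q p.2 p.1 ≤ 0 → p.1 < p.2))

/-! ### Auxiliary lemmas -/

lemma aCoef_symm (n : ℕ) (Q : Matrix (Fin n) (Fin n) ℝ) (i j : Fin n) :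
    aCoef n Q i j = aCoef n Q j i := by
  rcases eq_or_ne i j with h | h
  · simp [h]
  · simp [aCoef, h, h.symm]; ring

lemma quad_delta (n : ℕ) (Q : Matrix (Fin n) (Fin n) ℝ) (i j : Fin n) (hij : i ≠ j)
    (x : Fin n → ℝ) (hxi : x i = 1) (hxj : x j = 0) :
    quadForm n Q (Function.update (Function.update x i 0) j 1)
      = quadForm n Q x
        + ((∑ k ∈ univ.filter (fun k => k ≠ i ∧ k ≠ j),
              (aCoef n Q j k - aCoef n Q i k) * x k)
            + aCoef n Q j j - aCoef n Q i i) := by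
  classical
  set e : Fin n → ℝ := fun k => (if k = j then (1:ℝ) else 0) - (if k = i then 1 else 0) with he
  have hy : ∀ k, (Function.update (Function.update x i 0) j 1) k = x k + e k := by
    intro k
    rcases eq_or_ne k j with h | h
    · subst h; simp [Function.update, hij.symm, hxj, he]
    · rcases eq_or_ne k i with h2 | h2
      · subst h2; simp [Function.update, h, hxi, he]
      · simp [Function.update, h, h2, he]
  have sum_e : ∀ (f : Fin n → ℝ), ∑ q, f q * e q = f j - f i := by
    intro f
    have : ∀ q, f q * e q = (if q = j then f q else 0) - (if q = i then f q else 0) := by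
      intro q; simp only [he]; split <;> split <;> ring
    simp only [this, Finset.sum_sub_distrib, Finset.sum_ite_eq' univ, mem_univ, if_true]
  have expand : ∀ p q, Q p q * (x p + e p) * (x q + e q)
      = Q p q * x p * x q + Q p q * x p * e q + Q p q * e p * x q + Q p q * e p * e q := by
    intros; ring
  have step1 : quadForm n Q (Function.update (Function.update x i 0) j 1)
      = quadForm n Q x + (∑ p, ∑ q, Q p q * x p * e q)
        + (∑ p, ∑ q, Q p q * e p * x q) + (∑ p, ∑ q, Q p q * e p * e q) := by
    simp only [quadForm, hy, expand, Finset.sum_add_distrib]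
  have s1 : (∑ p, ∑ q, Q p q * x p * e q) = ∑ p, (Q p j * x p - Q p i * x p) := by
    refine Finset.sum_congr rfl fun p _ => ?_
    exact sum_e (fun q => Q p q * x p)
  have s2 : (∑ p, ∑ q, Q p q * e p * x q) = ∑ q, (Q j q * x q - Q i q * x q) := by
    rw [Finset.sum_comm]
    refine Finset.sum_congr rfl fun q _ => ?_
    calc ∑ p, Q p q * e p * x q = ∑ p, (fun p => Q p q * x q) p * e p := by
          refine Finset.sum_congr rfl fun p _ => by ring
      _ = Q j q * x q - Q i q * x q := sum_e (fun p => Q p q * x q)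
  have s3 : (∑ p, ∑ q, Q p q * e p * e q) = (Q j j - Q j i) - (Q i j - Q i i) := by
    have inner : ∀ p, ∑ q, Q p q * e p * e q = (Q p j - Q p i) * e p := by
      intro p
      calc ∑ q, Q p q * e p * e q = (fun q => Q p q * e p) j - (fun q => Q p q * e p) i :=
            sum_e (fun q => Q p q * e p)
        _ = (Q p j - Q p i) * e p := by ring
    simp only [inner]
    calc ∑ p, (Q p j - Q p i) * e p = ∑ p, (fun p => Q p j - Q p i) p * e p := rfl
      _ = (Q j j - Q j i) - (Q i j - Q i i) := sum_e (fun p => Q p j - Q p i)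
  have s12 : (∑ p, (Q p j * x p - Q p i * x p)) + (∑ q, (Q j q * x q - Q i q * x q))
      = ∑ k, (Q k j + Q j k - Q k i - Q i k) * x k := by
    rw [← Finset.sum_add_distrib]
    refine Finset.sum_congr rfl fun k _ => by ring
  have huniv : (univ : Finset (Fin n))
      = insert i (insert j (univ.filter (fun k => k ≠ i ∧ k ≠ j))) := by
    ext l; simp only [mem_univ, mem_insert, mem_filter, true_and, true_iff]
    by_cases h1 : l = i
    · tauto
    · by_cases h2 : l = j <;> tauto
  have hjn : j ∉ univ.filter (fun k => k ≠ i ∧ k ≠ j) := by simp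
  have hin : i ∉ insert j (univ.filter (fun k => k ≠ i ∧ k ≠ j)) := by simp [hij]
  have split : ∑ k, (Q k j + Q j k - Q k i - Q i k) * x k
      = (Q i j + Q j i - Q i i - Q i i) * 1 + (0:ℝ)
        + ∑ k ∈ univ.filter (fun k => k ≠ i ∧ k ≠ j), (aCoef n Q j k - aCoef n Q i k) * x k := by
    conv_lhs => rw [huniv]
    rw [Finset.sum_insert hin, Finset.sum_insert hjn, hxi, hxj]
    have : ∀ k ∈ univ.filter (fun k => k ≠ i ∧ k ≠ j),
        (Q k j + Q j k - Q k i - Q i k) * x k = (aCoef n Q j k - aCoef n Q i k) * x k := by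
      intro k hk
      rw [mem_filter] at hk
      have h1 : j ≠ k := fun h => hk.2.2 h.symm
      have h2 : i ≠ k := fun h => hk.2.1 h.symm
      simp only [aCoef, if_neg h1, if_neg h2]
      ring
    rw [Finset.sum_congr rfl this]
    ring
  have haj : aCoef n Q j j = Q j j := by simp [aCoef]
  have hai : aCoef n Q i i = Q i i := by simp [aCoef]
  rw [step1, s1, s2, s3]
  have : (∑ p, (Q p j * x p - Q p i * x p)) + (∑ q, (Q j q * x q - Q i q * x q))
      = (Q i j + Q j i - Q i i - Q i i) * 1 + (0:ℝ)
        + ∑ k ∈ univ.filter (fun k => k ≠ i ∧ k ≠ j), (aCoef n Q j k - aCoef n Q i k) * x k := by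
    rw [s12, split]
  rw [haj, hai]
  linarith [this]

lemma max0_tri (a b c : ℝ) : max 0 (a - c) ≤ max 0 (a - b) + max 0 (b - c) := by
  apply max_le
  · have := le_max_left (0:ℝ) (a-b); have := le_max_left (0:ℝ) (b-c); linarith
  · have := le_max_right (0:ℝ) (a-b); have := le_max_right (0:ℝ) (b-c); linarith

lemma Sval_tri (n : ℕ) (Q : Matrix (Fin n) (Fin n) ℝ) (i j k : Fin n)
    (hij : i ≠ j) (hjk : j ≠ k) (hik : i ≠ k) :
    Sval n Q i k ≤ Sval n Q i j + Sval n Q j k := by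
  classical
  set F : Finset (Fin n) := univ.filter (fun l => l ≠ i ∧ l ≠ j ∧ l ≠ k) with hF
  have hik' : univ.filter (fun l => l ≠ i ∧ l ≠ k) = insert j F := by
    ext l
    simp only [hF, mem_filter, mem_univ, true_and, mem_insert]
    by_cases h : l = j
    · subst h; simp [hij.symm, hjk]
    · tauto
  have hij' : univ.filter (fun l => l ≠ i ∧ l ≠ j) = insert k F := by
    ext l
    simp only [hF, mem_filter, mem_univ, true_and, mem_insert]
    by_cases h : l = k
    · subst h; simp [hik.symm, hjk.symm]
    · tauto
  have hjk' : univ.filter (fun l => l ≠ j ∧ l ≠ k) = insert i F := by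
    ext l
    simp only [hF, mem_filter, mem_univ, true_and, mem_insert]
    by_cases h : l = i
    · subst h; simp [hij, hik]
    · tauto
  have hjF : j ∉ F := by simp [hF]
  have hkF : k ∉ F := by simp [hF]
  have hiF : i ∉ F := by simp [hF]
  have hsum : ∑ l ∈ F, max 0 (aCoef n Q k l - aCoef n Q i l)
      ≤ (∑ l ∈ F, max 0 (aCoef n Q j l - aCoef n Q i l))
        + ∑ l ∈ F, max 0 (aCoef n Q k l - aCoef n Q j l) := by
    rw [← Finset.sum_add_distrib]
    exact Finset.sum_le_sum fun l _ => by rw [add_comm]; exact max0_tri _ _ _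
  have hextra : max 0 (aCoef n Q k j - aCoef n Q i j)
      ≤ max 0 (aCoef n Q j k - aCoef n Q i k) + max 0 (aCoef n Q k i - aCoef n Q j i) := by
    have h1 : aCoef n Q k j = aCoef n Q j k := aCoef_symm n Q k j
    have h2 : aCoef n Q k i = aCoef n Q i k := aCoef_symm n Q k i
    have h3 : aCoef n Q j i = aCoef n Q i j := aCoef_symm n Q j i
    rw [h1, h2, h3]
    exact max0_tri (aCoef n Q j k) (aCoef n Q i k) (aCoef n Q i j)
  simp only [Sval, hik', hij', hjk', Finset.sum_insert hjF, Finset.sum_insert hkF,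
    Finset.sum_insert hiF]
  linarith

lemma Sval_antisymm (n : ℕ) (Q : Matrix (Fin n) (Fin n) ℝ) (i j : Fin n) :
    0 ≤ Sval n Q i j + Sval n Q j i := by
  have h1 : (0:ℝ) ≤ ∑ k ∈ univ.filter (fun k => k ≠ i ∧ k ≠ j),
      max 0 (aCoef n Q j k - aCoef n Q i k) :=
    Finset.sum_nonneg fun k _ => le_max_left _ _
  have h2 : (0:ℝ) ≤ ∑ k ∈ univ.filter (fun k => k ≠ j ∧ k ≠ i),
      max 0 (aCoef n Q i k - aCoef n Q j k) :=
    Finset.sum_nonneg fun k _ => le_max_left _ _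
  simp only [Sval]
  linarith

/-- The edge relation as a proposition. -/
def Pedge (n : ℕ) (Q : Matrix (Fin n) (Fin n) ℝ) (i j : Fin n) : Prop :=
  i ≠ j ∧ Sval n Q i j ≤ 0 ∧ (Sval n Q j i ≤ 0 → i < j)

lemma mem_ordE (n : ℕ) (Q : Matrix (Fin n) (Fin n) ℝ) (p : Fin n × Fin n) :
    p ∈ ordE n Q ↔ Pedge n Q p.1 p.2 := by
  simp [ordE, Pedge]

lemma Pedge_asymm (n : ℕ) (Q : Matrix (Fin n) (Fin n) ℝ) (i j : Fin n)
    (h1 : Pedge n Q i j) (h2 : Pedge n Q j i) : False := by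
  obtain ⟨_, hsij, hoij⟩ := h1
  obtain ⟨_, hsji, hoji⟩ := h2
  exact absurd (hoji hsij) (not_lt.mpr (le_of_lt (hoij hsji)))

lemma Pedge_trans (n : ℕ) (Q : Matrix (Fin n) (Fin n) ℝ) (i j k : Fin n)
    (h1 : Pedge n Q i j) (h2 : Pedge n Q j k) : Pedge n Q i k := by
  obtain ⟨hij, hsij, hoij⟩ := h1
  obtain ⟨hjk, hsjk, hojk⟩ := h2
  have hik : i ≠ k := by
    rintro rfl
    exact Pedge_asymm n Q i j ⟨hij, hsij, hoij⟩ ⟨hjk, hsjk, hojk⟩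
  have hsik : Sval n Q i k ≤ 0 :=
    le_trans (Sval_tri n Q i j k hij hjk hik) (by linarith)
  refine ⟨hik, hsik, fun hski => ?_⟩
  have hsji : Sval n Q j i ≤ 0 :=
    le_trans (Sval_tri n Q j k i hjk (Ne.symm hik) (Ne.symm hij)) (by linarith)
  have hskj : Sval n Q k j ≤ 0 :=
    le_trans (Sval_tri n Q k i j (Ne.symm hik) hij (Ne.symm hjk)) (by linarith)
  exact lt_trans (hoij hsji) (hojk hskj)

/-- Rank of a vertex in the strict partial order `Pedge`. -/
noncomputable def cRank (n : ℕ) (Q : Matrix (Fin n) (Fin n) ℝ) (i : Fin n) : ℕ :=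
  Set.ncard {k | Pedge n Q k i}

lemma cRank_lt (n : ℕ) (Q : Matrix (Fin n) (Fin n) ℝ) (i j : Fin n)
    (h : Pedge n Q i j) : cRank n Q i < cRank n Q j := by
  apply Set.ncard_lt_ncard
  · constructor
    · intro k hk
      exact Pedge_trans n Q k i j hk h
    · intro hsub
      have : Pedge n Q i i := hsub h
      exact this.1 rfl
  · exact Set.toFinite _

open Classical in
/-- Weight used for termination of the swap procedure. -/
noncomputable def Wfun (n : ℕ) (Q : Matrix (Fin n) (Fin n) ℝ) (x : Fin n → ℝ) : ℕ :=
  ∑ k, if x k = 1 then cRank n Q k else 0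

lemma Wfun_le (n : ℕ) (Q : Matrix (Fin n) (Fin n) ℝ) (x : Fin n → ℝ) :
    Wfun n Q x ≤ ∑ k, cRank n Q k := by
  classical
  refine Finset.sum_le_sum fun k _ => ?_
  split <;> simp

lemma step_lemma (n : ℕ) (Q : Matrix (Fin n) (Fin n) ℝ) (x : Fin n → ℝ)
    (hx : x ∈ Bset n) (hnot : x ∉ BsetG n (ordE n Q)) :
    ∃ x' ∈ Bset n, quadForm n Q x' ≤ quadForm n Q x ∧ Wfun n Q x < Wfun n Q x' := by
  classical
  have hmem : ∃ e ∈ ordE n Q, x e.1 = 1 ∧ x e.2 ≠ 1 := by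
    have h : ¬ ∀ e ∈ ordE n Q, x e.1 = 1 → x e.2 = 1 := fun h => hnot ⟨hx, h⟩
    push_neg at h
    exact h
  obtain ⟨e, he, hxi, hxj2⟩ := hmem
  obtain ⟨i, j⟩ := e
  rw [mem_ordE] at he
  have hij : i ≠ j := he.1
  have hxj : x j = 0 := (hx j).resolve_right hxj2
  set x' := Function.update (Function.update x i 0) j 1 with hx'
  have hx'i : x' i = 0 := by simp [hx', Function.update, hij]
  have hx'j : x' j = 1 := by simp [hx', Function.update]
  have hx'k : ∀ k, k ≠ i → k ≠ j → x' k = x k := by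
    intro k h1 h2; simp [hx', Function.update, h1, h2]
  refine ⟨x', ?_, ?_, ?_⟩
  · intro k
    rcases eq_or_ne k j with rfl | h2
    · right; exact hx'j
    · rcases eq_or_ne k i with rfl | h1
      · left; exact hx'i
      · rw [hx'k k h1 h2]; exact hx k
  · rw [quad_delta n Q i j hij x hxi hxj]
    have hbound : ∑ k ∈ univ.filter (fun k => k ≠ i ∧ k ≠ j),
        (aCoef n Q j k - aCoef n Q i k) * x k
        ≤ ∑ k ∈ univ.filter (fun k => k ≠ i ∧ k ≠ j),
            max 0 (aCoef n Q j k - aCoef n Q i k) := by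
      refine Finset.sum_le_sum fun k _ => ?_
      rcases hx k with h | h
      · rw [h, mul_zero]; exact le_max_left _ _
      · rw [h, mul_one]; exact le_max_right _ _
    have hS := he.2.1
    simp only [Sval] at hS
    linarith
  · -- Wfun increases
    have hlt := cRank_lt n Q i j he
    have huniv : (univ : Finset (Fin n))
        = insert i (insert j (univ.filter (fun k => k ≠ i ∧ k ≠ j))) := by
      ext l; simp only [mem_univ, mem_insert, mem_filter, true_and, true_iff]
      by_cases h1 : l = i
      · tauto
      · by_cases h2 : l = j <;> tauto
    have hjn : j ∉ univ.filter (fun k => k ≠ i ∧ k ≠ j) := by simp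
    have hin : i ∉ insert j (univ.filter (fun k => k ≠ i ∧ k ≠ j)) := by simp [hij]
    have key : Wfun n Q x' + cRank n Q i = Wfun n Q x + cRank n Q j := by
      unfold Wfun
      conv_lhs => rw [huniv]
      conv_rhs => rw [huniv]
      rw [Finset.sum_insert hin, Finset.sum_insert hjn,
        Finset.sum_insert hin, Finset.sum_insert hjn]
      rw [if_pos hx'j, if_pos hxi, if_neg (by rw [hx'i]; norm_num),
        if_neg (by rw [hxj]; norm_num)]
      have : ∑ k ∈ univ.filter (fun k => k ≠ i ∧ k ≠ j),
          (if x' k = 1 then cRank n Q k else 0)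
          = ∑ k ∈ univ.filter (fun k => k ≠ i ∧ k ≠ j),
            (if x k = 1 then cRank n Q k else 0) := by
        refine Finset.sum_congr rfl fun k hk => ?_
        rw [mem_filter] at hk
        rw [hx'k k hk.2.1 hk.2.2]
      omega
    omega

lemma descend (n : ℕ) (Q : Matrix (Fin n) (Fin n) ℝ) :
    ∀ (m : ℕ) (x : Fin n → ℝ), x ∈ Bset n → (∑ k, cRank n Q k) ≤ Wfun n Q x + m →
      ∃ y ∈ BsetG n (ordE n Q), quadForm n Q y ≤ quadForm n Q x := by
  intro m
  induction m with
  | zero =>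
    intro x hx hm
    by_cases hg : x ∈ BsetG n (ordE n Q)
    · exact ⟨x, hg, le_refl _⟩
    · obtain ⟨x', hx', _, hW⟩ := step_lemma n Q x hx hg
      have := Wfun_le n Q x'
      omega
  | succ m ih =>
    intro x hx hm
    by_cases hg : x ∈ BsetG n (ordE n Q)
    · exact ⟨x, hg, le_refl _⟩
    · obtain ⟨x', hx', hq, hW⟩ := step_lemma n Q x hx hg
      obtain ⟨y, hy, hqy⟩ := ih x' hx' (by omega)
      exact ⟨y, hy, le_trans hqy hq⟩

theorem stmt14 (n : ℕ) (Q : Matrix (Fin n) (Fin n) ℝ) :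
    sInf (quadForm n Q '' Bset n) = sInf (quadForm n Q '' BsetG n (ordE n Q)) := by
  have hBfin : (Bset n).Finite := by
    apply Set.Finite.subset (Set.Finite.pi (t := fun _ : Fin n => ({0,1} : Set ℝ))
      (fun _ => (Set.finite_singleton (1:ℝ)).insert 0))
    intro x hx i _
    rcases hx i with h | h <;> simp [h]
  have hsub : BsetG n (ordE n Q) ⊆ Bset n := fun x hx => hx.1
  have hGfin : (BsetG n (ordE n Q)).Finite := hBfin.subset hsub
  have hBne : (Bset n).Nonempty := ⟨fun _ => 0, fun i => Or.inl rfl⟩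
  have hGne : (BsetG n (ordE n Q)).Nonempty :=
    ⟨fun _ => 0, fun i => Or.inl rfl, fun e _ h1 => absurd h1 (by norm_num)⟩
  apply le_antisymm
  · exact csInf_le_csInf (hBfin.image _).bddBelow (hGne.image _)
      (Set.image_mono hsub)
  · refine le_csInf (hBne.image _) ?_
    rintro b ⟨x, hx, rfl⟩
    obtain ⟨y, hy, hqy⟩ := descend n Q (∑ k, cRank n Q k) x hx (by omega)
    exact le_trans (csInf_le (hGfin.image _).bddBelow ⟨y, hy, rfl⟩) hqy
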